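/- For every instance (v, B), the liquid welfare of the Uniform Price Auction's allocation weakly dominates that of the Adaptive Clinching Auction: W̄(x^u) ≥ W̄(x^c). In particular, using the characterizations: (a) there exists k^c such that the clinching auction charges π^c_i = B_i for i ≤ k^c, x^c_i = 0 for i > k^c+1, and B_i ≤ v_{k^c+1}·x^c_i for i ≤ k^c; (b) the uniform price auction satisfies W̄(x^u) = Σ_{j≤k^u} B_j + v_{k^u+1}·x^u_{k^u+1} with v_{k^u+1}·x^u_{k^u+1} ≤ B_{k^u+1} and 1 ≤ Σ_{i≤k^u} B_i/v_{k^u+1} + x^u_{k^u+1}; then k^c ≤ k^u and W̄(x^c) ≤ W̄(x^u). -/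

import Mathlib

/-- the liquid welfare of the Uniform Price Auction's allocation
weakly dominates that of the Adaptive Clinching Auction on every instance. -/
theorem stmt8 (n : ℕ) (v B : ℕ → ℝ)
    (hv : ∀ i, 1 ≤ i → i ≤ n → 0 < v i) (hB : ∀ i, 1 ≤ i → i ≤ n → 0 < B i)
    (hsort : ∀ i j, 1 ≤ i → i ≤ j → j ≤ n → v j ≤ v i)
    (hv0 : ∀ j, n < j → v j = 0)
    -- the Uniform Price Auction: threshold index and allocation
    (ku : ℕ) (hkun : ku ≤ n)
    (hku : ku = 0 ∨ ∑ j ∈ Finset.Icc 1 ku, B j ≤ v ku)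
    (hkumax : ∀ m, ku < m → m ≤ n → v m < ∑ j ∈ Finset.Icc 1 m, B j)
    (xu : ℕ → ℝ) (hxunn : ∀ i, 0 ≤ xu i)
    (hxuI : v (ku+1) < ∑ j ∈ Finset.Icc 1 ku, B j → ∀ i, 1 ≤ i → i ≤ n →
      xu i = if i ≤ ku then B i / ∑ j ∈ Finset.Icc 1 ku, B j else 0)
    (hxuII : ∑ j ∈ Finset.Icc 1 ku, B j ≤ v (ku+1) → ∀ i, 1 ≤ i → i ≤ n →
      xu i = if i ≤ ku then B i / v (ku+1)
             else if i = ku+1 then 1 - (∑ j ∈ Finset.Icc 1 ku, B j) / v (ku+1)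
             else 0)
    (hxusum : ∑ i ∈ Finset.Icc 1 n, xu i = 1)
    -- properties (b) of the uniform price outcome
    (hWu : ∑ i ∈ Finset.Icc 1 n, min (v i * xu i) (B i) =
      (∑ j ∈ Finset.Icc 1 ku, B j) + v (ku+1) * xu (ku+1))
    (hub : v (ku+1) * xu (ku+1) ≤ B (ku+1))
    (hstar : 1 ≤ (∑ i ∈ Finset.Icc 1 ku, B i / v (ku+1)) + xu (ku+1))
    -- properties (a) of the clinching outcome
    (xc πc : ℕ → ℝ) (kc : ℕ) (hkcn : kc + 1 ≤ n)
    (hxcnn : ∀ i, 0 ≤ xc i) (hxcsum : ∑ i ∈ Finset.Icc 1 n, xc i = 1)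
    (hπB : ∀ i, 1 ≤ i → i ≤ kc → πc i = B i)
    (hxc0 : ∀ i, kc + 1 < i → i ≤ n → xc i = 0)
    (hBle : ∀ i, 1 ≤ i → i ≤ kc → B i ≤ v (kc+1) * xc i) :
    kc ≤ ku ∧
    ∑ i ∈ Finset.Icc 1 n, min (v i * xc i) (B i) ≤
      ∑ i ∈ Finset.Icc 1 n, min (v i * xu i) (B i) := by
  have hvk1 : 0 < v (kc+1) := hv _ (by omega) hkcn
  -- rewrite all Icc 1 m sums as Ioc 0 m sums
  have hIcc : ∀ m : ℕ, Finset.Icc 1 m = Finset.Ioc 0 m := fun m => Finset.Icc_add_one_left_eq_Ioc 0 m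
  -- partial sum of xc up to kc+1 is at most 1
  have hxcpart : ∑ i ∈ Finset.Ioc 0 (kc+1), xc i ≤ 1 := by
    rw [← hxcsum, hIcc]
    exact Finset.sum_le_sum_of_subset_of_nonneg
      (Finset.Ioc_subset_Ioc le_rfl hkcn) (fun i _ _ => hxcnn i)
  have hsplit : ∑ i ∈ Finset.Ioc 0 (kc+1), xc i
      = ∑ i ∈ Finset.Ioc 0 kc, xc i + xc (kc+1) :=
    Finset.sum_Ioc_succ_top (Nat.zero_le _) _
  have hBsumle : ∑ j ∈ Finset.Ioc 0 kc, B j ≤ v (kc+1) * ∑ j ∈ Finset.Ioc 0 kc, xc j := by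
    rw [Finset.mul_sum]
    refine Finset.sum_le_sum fun i hi => ?_
    have := Finset.mem_Ioc.mp hi
    exact hBle i (by omega) this.2
  have hxcsumnn : 0 ≤ ∑ j ∈ Finset.Ioc 0 kc, xc j :=
    Finset.sum_nonneg fun i _ => hxcnn i
  -- part 1 : kc ≤ ku
  have hkcku : kc ≤ ku := by
    by_contra h
    push_neg at h
    have h1 : 1 ≤ kc := by omega
    have hmax := hkumax kc h (by omega)
    rw [hIcc] at hmax
    have hv2 : v (kc+1) ≤ v kc := hsort kc (kc+1) h1 (by omega) hkcn
    have hle1 : ∑ j ∈ Finset.Ioc 0 kc, xc j ≤ 1 := by linarith [hxcnn (kc+1)]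
    have := mul_le_mul_of_nonneg_left hle1 hvk1.le
    rw [mul_one] at this
    linarith
  refine ⟨hkcku, ?_⟩
  -- the tail of the clinching welfare vanishes
  have htail : ∑ i ∈ Finset.Ioc (kc+1) n, min (v i * xc i) (B i) = 0 := by
    refine Finset.sum_eq_zero fun i hi => ?_
    have hi' := Finset.mem_Ioc.mp hi
    rw [hxc0 i hi'.1 hi'.2, mul_zero]
    have := hB i (by omega) hi'.2
    simp [min_eq_left, le_of_lt this]
  have hWcsplit : ∑ i ∈ Finset.Icc 1 n, min (v i * xc i) (B i)
      = ∑ i ∈ Finset.Ioc 0 kc, min (v i * xc i) (B i)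
        + min (v (kc+1) * xc (kc+1)) (B (kc+1)) := by
    rw [hIcc, ← Finset.sum_Ioc_consecutive _ (Nat.zero_le (kc+1)) hkcn, htail,
      add_zero, Finset.sum_Ioc_succ_top (Nat.zero_le kc)]
  have hheadB : ∑ i ∈ Finset.Ioc 0 kc, min (v i * xc i) (B i)
      ≤ ∑ i ∈ Finset.Ioc 0 kc, B i :=
    Finset.sum_le_sum fun i _ => min_le_right _ _
  -- the uniform welfare is at least ∑_{j ≤ ku} B j
  have hvku1nn : 0 ≤ v (ku+1) := by
    rcases le_or_gt (ku+1) n with h | h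
    · exact le_of_lt (hv _ (by omega) h)
    · rw [hv0 _ h]
  have hWuge : (∑ j ∈ Finset.Icc 1 ku, B j) ≤
      ∑ i ∈ Finset.Icc 1 n, min (v i * xu i) (B i) := by
    rw [hWu]
    nlinarith [hxunn (ku+1)]
  rcases eq_or_lt_of_le hkcku with heq | hlt
  · -- kc = ku : clinching welfare ≤ v (kc+1) ≤ uniform welfare
    have hWcle : ∑ i ∈ Finset.Icc 1 n, min (v i * xc i) (B i) ≤ v (kc+1) := by
      rw [hWcsplit]
      have h1 : min (v (kc+1) * xc (kc+1)) (B (kc+1)) ≤ v (kc+1) * xc (kc+1) :=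
        min_le_left _ _
      nlinarith
    have hvle : v (ku+1) ≤ ∑ i ∈ Finset.Icc 1 n, min (v i * xu i) (B i) := by
      rw [hWu]
      have hdiv : ∑ i ∈ Finset.Icc 1 ku, B i / v (ku+1)
          = (∑ i ∈ Finset.Icc 1 ku, B i) / v (ku+1) := by
        rw [Finset.sum_div]
      rw [hdiv] at hstar
      have hvku : 0 < v (ku+1) := by rw [← heq]; exact hvk1
      have := mul_le_mul_of_nonneg_left hstar (le_of_lt hvku)
      rw [mul_add, mul_div_cancel₀ _ (ne_of_gt hvku), mul_one] at this
      linarith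
    rw [← heq] at hvle
    linarith
  · -- kc < ku : clinching welfare ≤ ∑_{j ≤ kc+1} B j ≤ ∑_{j ≤ ku} B j
    have hWcle : ∑ i ∈ Finset.Icc 1 n, min (v i * xc i) (B i)
        ≤ ∑ i ∈ Finset.Ioc 0 (kc+1), B i := by
      rw [hWcsplit, Finset.sum_Ioc_succ_top (Nat.zero_le kc)]
      have := min_le_right (v (kc+1) * xc (kc+1)) (B (kc+1))
      linarith
    have hmono : ∑ i ∈ Finset.Ioc 0 (kc+1), B i ≤ ∑ i ∈ Finset.Ioc 0 ku, B i := by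
      refine Finset.sum_le_sum_of_subset_of_nonneg
        (Finset.Ioc_subset_Ioc le_rfl hlt) fun i hi _ => ?_
      have hi' := Finset.mem_Ioc.mp hi
      exact le_of_lt (hB i (by omega) (le_trans hi'.2 hkun))
    rw [hIcc] at hWuge
    linarith
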